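/- Let H be a graph with no matching of n/2 edges, let A be the set of vertices of H of degree at least n, and let M be a maximal matching in H \ A. Then |A| ≤ n/2 − v(M)/2, where v(M) is the number of vertices covered by M. -/

import Mathlib

open SimpleGraph

/-- `H` contains a matching of `m` edges. -/
def HasMatching {V : Type*} (H : SimpleGraph V) (m : ℕ) : Prop :=
  ∃ M : H.Subgraph, M.IsMatching ∧ M.edgeSet.ncard = m

/-- In a matching, the number of vertices is twice the number of edges. -/
lemma matching_card_verts {V : Type*} [Fintype V] {H : SimpleGraph V}
    {M : H.Subgraph} (hM : M.IsMatching) : M.verts.ncard = 2 * M.edgeSet.ncard := by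
  classical
  haveI : Fintype M.verts := (Set.toFinite M.verts).fintype
  haveI : Fintype M.edgeSet := (Set.toFinite M.edgeSet).fintype
  rw [Set.ncard_eq_toFinset_card', Set.ncard_eq_toFinset_card', Set.toFinset_card,
    Set.toFinset_card]
  show (Finset.univ : Finset M.verts).card = 2 * (Finset.univ : Finset M.edgeSet).card
  have key : (Finset.univ : Finset M.verts).card =
      ∑ e : M.edgeSet, (Finset.univ.filter (fun v => hM.toEdge v = e)).card :=
    Finset.card_eq_sum_card_fiberwise (fun x _ => Finset.mem_univ _)
  have hfiber : ∀ e : M.edgeSet, (Finset.univ.filter (fun v => hM.toEdge v = e)).card = 2 := by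
    rintro ⟨e, he⟩
    induction e using Sym2.ind with
    | _ x y =>
      have hadj : M.Adj x y := he
      have hx : x ∈ M.verts := M.edge_vert hadj
      have hy : y ∈ M.verts := M.edge_vert hadj.symm
      have hne : x ≠ y := (M.adj_sub hadj).ne
      have heq : (Finset.univ.filter (fun v => hM.toEdge v = ⟨s(x, y), he⟩)) =
          {⟨x, hx⟩, ⟨y, hy⟩} := by
        ext ⟨v, hv⟩
        simp only [Finset.mem_filter, Finset.mem_univ, true_and, Finset.mem_insert,
          Finset.mem_singleton, Subtype.mk_eq_mk]
        constructor
        · intro h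
          have h' := congrArg Subtype.val h
          simp only [Subgraph.IsMatching.toEdge] at h'
          rcases Sym2.eq_iff.mp h' with ⟨h1, _⟩ | ⟨h1, _⟩
          · left; exact h1
          · right; exact h1
        · rintro (rfl | rfl)
          · exact hM.toEdge_eq_of_adj hadj
          · rw [hM.toEdge_eq_of_adj hadj.symm]
            simp [Sym2.eq_swap]
      rw [heq, Finset.card_insert_of_notMem (by simp [hne]), Finset.card_singleton]
  rw [key]
  simp only [hfiber, Finset.sum_const, Finset.card_univ, smul_eq_mul]
  ring

/-- Any matching contains a sub-matching with any smaller number of edges. -/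
lemma exists_submatching {V : Type*} [Fintype V] {H : SimpleGraph V} {M : H.Subgraph}
    (hM : M.IsMatching) (k : ℕ) (hk : k ≤ M.edgeSet.ncard) :
    ∃ N : H.Subgraph, N ≤ M ∧ N.IsMatching ∧ N.edgeSet.ncard = k := by
  classical
  induction k with
  | zero =>
    refine ⟨⊥, bot_le, ?_, by simp⟩
    intro v hv
    simp only [Subgraph.verts_bot, Set.mem_empty_iff_false] at hv
  | succ k ih =>
    obtain ⟨N, hNM, hNmatch, hNcard⟩ := ih (le_trans (Nat.le_succ k) hk)
    have hsub : N.edgeSet ⊆ M.edgeSet := Subgraph.edgeSet_mono hNM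
    have hss : N.edgeSet ⊂ M.edgeSet := by
      refine ⟨hsub, fun h => ?_⟩
      have := Set.ncard_le_ncard h (Set.toFinite _)
      omega
    obtain ⟨e, heM, heN⟩ := Set.exists_of_ssubset hss
    revert heM heN
    induction e using Sym2.ind with
    | _ x y =>
      intro heM heN
      have hadj : M.Adj x y := heM
      have hxv : x ∉ N.verts := by
        intro hx
        obtain ⟨w, hw, -⟩ := hNmatch hx
        have hMxw : M.Adj x w := hNM.2 hw
        have hwy : w = y := (hM (M.edge_vert hadj)).unique hMxw hadj
        exact heN (hwy ▸ hw)
      have hyv : y ∉ N.verts := by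
        intro hy
        obtain ⟨w, hw, -⟩ := hNmatch hy
        have hMyw : M.Adj y w := hNM.2 hw
        have hwx : w = x := (hM (M.edge_vert hadj.symm)).unique hMyw hadj.symm
        apply heN
        rw [Sym2.eq_swap]
        exact hwx ▸ hw
      have hHadj : H.Adj x y := M.adj_sub hadj
      refine ⟨N ⊔ H.subgraphOfAdj hHadj, ?_, ?_, ?_⟩
      · refine sup_le hNM ⟨?_, ?_⟩
        · intro v hv
          simp only [subgraphOfAdj_verts, Set.mem_insert_iff, Set.mem_singleton_iff] at hv
          rcases hv with rfl | rfl
          · exact M.edge_vert hadj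
          · exact M.edge_vert hadj.symm
        · intro a b hab
          simp only [subgraphOfAdj_adj] at hab
          rw [Sym2.eq_iff] at hab
          rcases hab with ⟨rfl, rfl⟩ | ⟨rfl, rfl⟩
          · exact hadj
          · exact hadj.symm
      · refine hNmatch.sup (Subgraph.IsMatching.subgraphOfAdj hHadj) ?_
        refine Set.disjoint_left.mpr fun v hv hv' => ?_
        have hvN : v ∈ N.verts := N.support_subset_verts hv
        have hv2 : v ∈ ({x, y} : Set V) := by
          have := (H.subgraphOfAdj hHadj).support_subset_verts hv'
          simpa using this
        rcases hv2 with rfl | rfl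
        · exact hxv hvN
        · exact hyv hvN
      · rw [Subgraph.edgeSet_sup, edgeSet_subgraphOfAdj, Set.union_singleton,
          Set.ncard_insert_of_notMem heN (Set.toFinite _), hNcard]

/-- Greedy extension of a matching by a set of high-degree vertices. -/
lemma greedy_extend {V : Type*} [Fintype V] {H : SimpleGraph V} {n : ℕ} {M : H.Subgraph}
    (hM : M.IsMatching) (B : Finset V)
    (hBdeg : ∀ v ∈ B, n ≤ (H.neighborSet v).ncard)
    (hBM : Disjoint (B : Set V) M.verts) :
    ∀ S : Finset V, S ⊆ B → B.card + M.verts.ncard + S.card ≤ n →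
    ∃ M' : H.Subgraph, M'.IsMatching ∧ M ≤ M' ∧
      M'.edgeSet.ncard = M.edgeSet.ncard + S.card ∧
      M'.verts ∩ ↑B ⊆ ↑S ∧ (M'.verts \ ↑B).ncard ≤ M.verts.ncard + S.card := by
  classical
  intro S
  induction S using Finset.induction with
  | empty =>
    intro _ _
    refine ⟨M, hM, le_refl _, by simp, ?_, ?_⟩
    · intro x hx
      exact (Set.disjoint_left.mp hBM hx.2 hx.1).elim
    · simpa using Set.ncard_le_ncard Set.diff_subset (Set.toFinite _)
  | @insert a S' ha ih =>
    intro hsub hcard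
    have haB : a ∈ B := hsub (Finset.mem_insert_self a S')
    have hcardS : (insert a S').card = S'.card + 1 := Finset.card_insert_of_notMem ha
    obtain ⟨M'', hM''match, hMM'', hM''edge, hM''int, hM''diff⟩ :=
      ih (fun x hx => hsub (Finset.mem_insert_of_mem hx)) (by omega)
    have haM'' : a ∉ M''.verts := by
      intro h
      have haS' : a ∈ (↑S' : Set V) := hM''int ⟨h, by exact_mod_cast haB⟩
      exact ha (by exact_mod_cast haS')
    have hunion : ((↑B : Set V) ∪ M''.verts).ncard < n := by
      have h1 : (↑B : Set V) ∪ M''.verts ⊆ ↑B ∪ (M''.verts \ ↑B) := by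
        intro x hx
        rcases hx with hx | hx
        · exact Or.inl hx
        · by_cases hxB : x ∈ (↑B : Set V)
          · exact Or.inl hxB
          · exact Or.inr ⟨hx, hxB⟩
      have h2 := Set.ncard_le_ncard h1 (Set.toFinite _)
      have h3 := Set.ncard_union_le (↑B : Set V) (M''.verts \ ↑B)
      rw [Set.ncard_coe_finset] at h3
      omega
    have hba : ∃ b, H.Adj a b ∧ b ∉ (↑B : Set V) ∪ M''.verts := by
      by_contra hc
      push_neg at hc
      have hsub2 : H.neighborSet a ⊆ (↑B : Set V) ∪ M''.verts := fun b hb => hc b hb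
      have h4 := Set.ncard_le_ncard hsub2 (Set.toFinite _)
      have hdeg := hBdeg a haB
      omega
    obtain ⟨b, hab, hbnot⟩ := hba
    have hbB : b ∉ (↑B : Set V) := fun h => hbnot (Or.inl h)
    have hbM'' : b ∉ M''.verts := fun h => hbnot (Or.inr h)
    refine ⟨M'' ⊔ H.subgraphOfAdj hab, ?_, le_trans hMM'' le_sup_left, ?_, ?_, ?_⟩
    · refine hM''match.sup (Subgraph.IsMatching.subgraphOfAdj hab) ?_
      refine Set.disjoint_left.mpr fun v hv hv' => ?_
      have hvM : v ∈ M''.verts := M''.support_subset_verts hv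
      have hv2 : v ∈ ({a, b} : Set V) := by
        have := (H.subgraphOfAdj hab).support_subset_verts hv'
        simpa using this
      rcases hv2 with rfl | rfl
      · exact haM'' hvM
      · exact hbM'' hvM
    · have hse : s(a, b) ∉ M''.edgeSet := fun h => haM'' (M''.edge_vert h)
      rw [Subgraph.edgeSet_sup, edgeSet_subgraphOfAdj, Set.union_singleton,
        Set.ncard_insert_of_notMem hse (Set.toFinite _), hM''edge, hcardS]
      omega
    · intro x hx
      rw [Subgraph.verts_sup] at hx
      obtain ⟨hx1, hx2⟩ := hx
      rw [Finset.coe_insert]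
      rcases hx1 with hx1 | hx1
      · exact Set.mem_insert_of_mem a (hM''int ⟨hx1, hx2⟩)
      · simp only [subgraphOfAdj_verts, Set.mem_insert_iff, Set.mem_singleton_iff] at hx1
        rcases hx1 with rfl | rfl
        · exact Set.mem_insert x _
        · exact absurd hx2 hbB
    · have hsubd : (M'' ⊔ H.subgraphOfAdj hab).verts \ ↑B ⊆ insert b (M''.verts \ ↑B) := by
        intro x hx
        obtain ⟨hx1, hx2⟩ := hx
        rw [Subgraph.verts_sup] at hx1
        rcases hx1 with hx1 | hx1
        · exact Set.mem_insert_of_mem b ⟨hx1, hx2⟩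
        · simp only [subgraphOfAdj_verts, Set.mem_insert_iff, Set.mem_singleton_iff] at hx1
          rcases hx1 with rfl | rfl
          · exact absurd (Finset.mem_coe.mpr haB) hx2
          · exact Set.mem_insert x _
      have h5 := Set.ncard_le_ncard hsubd (Set.toFinite _)
      have h6 := Set.ncard_insert_le b (M''.verts \ (↑B : Set V))
      rw [hcardS]
      omega

theorem highDegree_bound {V : Type*} [Fintype V] (H : SimpleGraph V) (n : ℕ)
    (hn : Even n) (hn0 : 0 < n)
    (hmatch : ¬ HasMatching H (n / 2))
    (A : Set V) (hA : A = {v | n ≤ (H.neighborSet v).ncard})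
    (M : H.Subgraph) (hM : M.IsMatching) (hMA : M.verts ⊆ Aᶜ)
    (hmax : ∀ M' : H.Subgraph, M'.IsMatching → M'.verts ⊆ Aᶜ → M ≤ M' → M' = M) :
    (A.ncard : ℝ) ≤ (n : ℝ) / 2 - (M.verts.ncard : ℝ) / 2 := by
  classical
  by_contra hcon
  push_neg at hcon
  have hv2e : M.verts.ncard = 2 * M.edgeSet.ncard := matching_card_verts hM
  obtain ⟨m, hm⟩ := hn
  have hnat : n < 2 * A.ncard + M.verts.ncard := by
    have hr : (n : ℝ) < 2 * (A.ncard : ℝ) + (M.verts.ncard : ℝ) := by linarith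
    exact_mod_cast hr
  by_cases hem : m ≤ M.edgeSet.ncard
  · obtain ⟨N, _, hNmatch, hNcard⟩ := exists_submatching hM m hem
    exact hmatch ⟨N, hNmatch, by rw [hNcard]; omega⟩
  · have hkA : m - M.edgeSet.ncard ≤ A.ncard := by omega
    obtain ⟨B', hB'A, hB'card⟩ := Set.exists_subset_card_eq hkA
    have hB'fin : B'.Finite := Set.toFinite _
    set B := hB'fin.toFinset with hBdef
    have hBcoe : (↑B : Set V) = B' := hB'fin.coe_toFinset
    have hBcard : B.card = m - M.edgeSet.ncard := by
      rw [← Set.ncard_coe_finset, hBcoe]; exact hB'card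
    have hBdeg : ∀ v ∈ B, n ≤ (H.neighborSet v).ncard := by
      intro v hv
      have hvA : v ∈ A := hB'A (hBcoe ▸ Finset.mem_coe.mpr hv)
      rw [hA] at hvA
      exact hvA
    have hBM : Disjoint (↑B : Set V) M.verts := by
      rw [hBcoe]
      exact Set.disjoint_left.mpr fun x hx hxM => (hMA hxM) (hB'A hx)
    obtain ⟨M', hM'match, -, hM'edge, -, -⟩ :=
      greedy_extend hM B hBdeg hBM B (le_refl _) (by rw [hBcard, hv2e]; omega)
    exact hmatch ⟨M', hM'match, by rw [hM'edge, hBcard]; omega⟩
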